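/- arXiv:1407.3197 — 2 statements merged into one kernel-verified Lean document; each statement's English description precedes it below -/
import Mathlib

section
/- Invertibility of the 2×2 block saddle-point matrix: if A is a symmetric positive definite n×n real matrix, C is a symmetric positive semidefinite m×m real matrix, and ker C ∩ ker B = {0} where B is an n×m real matrix, then the (n+m)×(n+m) block matrix M = [[A, B],[Bᵀ, −C]] is invertible. -/
open scoped Matrix

theorem saddle_point_invertible {n m : ℕ}
    (A : Matrix (Fin n) (Fin n) ℝ) (B : Matrix (Fin n) (Fin m) ℝ)
    (C : Matrix (Fin m) (Fin m) ℝ)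
    (hA : A.PosDef) (hC : C.PosSemidef)
    (hker : ∀ z : Fin m → ℝ, C.mulVec z = 0 → B.mulVec z = 0 → z = 0) :
    IsUnit (Matrix.fromBlocks A B B.transpose (-C)) := by
  rw [Matrix.isUnit_iff_isUnit_det, isUnit_iff_ne_zero]
  intro hdet
  obtain ⟨v, hv, hMv⟩ := (Matrix.exists_mulVec_eq_zero_iff).mpr hdet
  set x := v ∘ Sum.inl
  set y := v ∘ Sum.inr
  rw [Matrix.fromBlocks_mulVec] at hMv
  have h1 : A.mulVec x + B.mulVec y = 0 := by
    funext i; exact congrFun hMv (Sum.inl i)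
  have h2 : B.transpose.mulVec x + (-C).mulVec y = 0 := by
    funext i; exact congrFun hMv (Sum.inr i)
  have key : x ⬝ᵥ A.mulVec x + y ⬝ᵥ C.mulVec y = 0 := by
    have e1 : x ⬝ᵥ (A.mulVec x + B.mulVec y) = 0 := by rw [h1, dotProduct_zero]
    have e2 : y ⬝ᵥ (B.transpose.mulVec x + (-C).mulVec y) = 0 := by
      rw [h2, dotProduct_zero]
    have e3 : x ⬝ᵥ B.mulVec y = y ⬝ᵥ B.transpose.mulVec x := by
      rw [Matrix.mulVec_transpose, Matrix.dotProduct_mulVec, dotProduct_comm]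
    rw [dotProduct_add] at e1 e2
    rw [Matrix.neg_mulVec, dotProduct_neg] at e2
    linarith
  have hx : x = 0 := by
    by_contra hx
    have hAx : 0 < x ⬝ᵥ A.mulVec x := by
      have := hA.dotProduct_mulVec_pos hx
      simpa using this
    have hCy : 0 ≤ y ⬝ᵥ C.mulVec y := by
      have := hC.dotProduct_mulVec_nonneg y
      simpa using this
    linarith
  have hCy0 : C.mulVec y = 0 := by
    have : y ⬝ᵥ C.mulVec y = 0 := by
      rw [hx] at key; simpa using key
    have := (hC.dotProduct_mulVec_zero_iff y).mp (by simpa using this)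
    exact this
  have hBy0 : B.mulVec y = 0 := by
    rw [hx, Matrix.mulVec_zero, zero_add] at h1
    exact h1
  have hy : y = 0 := hker y hCy0 hBy0
  apply hv
  funext i
  cases i with
  | inl i => exact congrFun hx i
  | inr i => exact congrFun hy i
end

section
/- Invertibility of the discretized electric Hessian: if A is symmetric positive definite, C̃ is symmetric positive definite, and B₂ has trivial kernel, then the block matrix M = [[A, B₁, B₂],[B₁ᵀ, −C̃, 0],[B₂ᵀ, 0, 0]] is invertible. -/
open Matrix

theorem electric_hessian_invertible {n m k : ℕ}
    (A : Matrix (Fin n) (Fin n) ℝ) (C' : Matrix (Fin m) (Fin m) ℝ)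
    (B₁ : Matrix (Fin n) (Fin m) ℝ) (B₂ : Matrix (Fin n) (Fin k) ℝ)
    (hA : A.PosDef) (hC' : C'.PosDef)
    (hB₂ : ∀ z : Fin k → ℝ, B₂.mulVec z = 0 → z = 0) :
    IsUnit (Matrix.fromBlocks A (Matrix.fromCols B₁ B₂)
      (Matrix.fromCols B₁ B₂).transpose
      (-(Matrix.fromBlocks C' 0 0 (0 : Matrix (Fin k) (Fin k) ℝ)))) := by
  set B := Matrix.fromCols B₁ B₂ with hB
  set D := Matrix.fromBlocks C' 0 0 (0 : Matrix (Fin k) (Fin k) ℝ) with hD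
  rw [Matrix.isUnit_iff_isUnit_det, isUnit_iff_ne_zero]
  intro hdet
  obtain ⟨v, hv, hMv⟩ := (Matrix.exists_mulVec_eq_zero_iff).mpr (by exact hdet)
  set x : Fin n → ℝ := v ∘ Sum.inl with hx
  set y : (Fin m ⊕ Fin k) → ℝ := v ∘ Sum.inr with hy
  set y₁ : Fin m → ℝ := y ∘ Sum.inl with hy₁
  set y₂ : Fin k → ℝ := y ∘ Sum.inr with hy₂
  have hv' : v = Sum.elim x y := by funext i; cases i <;> rfl
  have hyv : y = Sum.elim y₁ y₂ := by funext i; cases i <;> rfl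
  rw [hv', Matrix.fromBlocks_mulVec] at hMv
  have h1 : A.mulVec x + B.mulVec y = 0 := by
    funext i; exact congrFun hMv (Sum.inl i)
  have h2 : Bᵀ.mulVec x = D.mulVec y := by
    have h2' : Bᵀ.mulVec x + (-D).mulVec y = 0 := by
      funext i; exact congrFun hMv (Sum.inr i)
    rwa [Matrix.neg_mulVec, add_neg_eq_zero] at h2'
  have hyDy : y ⬝ᵥ D.mulVec y = y₁ ⬝ᵥ C'.mulVec y₁ := by
    rw [hyv, hD, Matrix.fromBlocks_mulVec]
    simp [Matrix.zero_mulVec, sumElim_dotProduct_sumElim]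
  have key : x ⬝ᵥ A.mulVec x = -(y₁ ⬝ᵥ C'.mulVec y₁) := by
    have e1 : x ⬝ᵥ (A.mulVec x + B.mulVec y) = 0 := by rw [h1]; simp
    rw [dotProduct_add] at e1
    have e2 : x ⬝ᵥ B.mulVec y = y ⬝ᵥ D.mulVec y := by
      rw [Matrix.dotProduct_mulVec, ← Matrix.mulVec_transpose, h2, dotProduct_comm]
    rw [e2, hyDy] at e1
    linarith
  have hC'nn : 0 ≤ y₁ ⬝ᵥ C'.mulVec y₁ := by
    have := hC'.posSemidef.dotProduct_mulVec_nonneg y₁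
    simpa using this
  have hx0 : x = 0 := by
    by_contra hxne
    have := hA.dotProduct_mulVec_pos hxne
    simp only [star_trivial] at this
    linarith
  have hAx0 : x ⬝ᵥ A.mulVec x = 0 := by rw [hx0]; simp
  have hy₁0 : y₁ = 0 := by
    by_contra hyne
    have := hC'.dotProduct_mulVec_pos hyne
    simp only [star_trivial] at this
    linarith
  have hBy : B.mulVec y = 0 := by
    rw [hx0] at h1; simpa using h1
  have hB₂y₂ : B₂.mulVec y₂ = 0 := by
    rw [hyv, hy₁0, hB, Matrix.fromCols_mulVec_sumElim] at hBy
    simpa using hBy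
  have hy₂0 : y₂ = 0 := hB₂ y₂ hB₂y₂
  apply hv
  rw [hv', hyv, hx0, hy₁0, hy₂0]
  funext i; cases i with
  | inl i => rfl
  | inr i => cases i <;> rfl
end
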